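/- For every positive integer p ≤ 2^n there exists an n×n integer matrix c whose rows are all of admissible type (each row being, up to permutation and sign, one of the nine allowed patterns), such that |det c| = p. -/

import Mathlib

/-- The nine admissible patterns (up to permutation and overall sign) for the
nonzero entries of a row. -/
def patterns : List (List ℤ) :=
  [[1], [2], [1, 1], [1, -1], [2, -1], [1, 1, -1], [2, -2], [2, -1, -1],
    [1, 1, -1, -1]]

/-- A vector in `ℤ^n` is admissible if, after a permutation of its entries and
possibly a global sign change, it coincides with one of the nine patterns
padded by zeros. -/
def Admissible {n : ℕ} (r : Fin n → ℤ) : Prop :=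
  ∃ l ∈ patterns, ∃ σ : Equiv.Perm (Fin n), ∃ ε : ℤ, (ε = 1 ∨ ε = -1) ∧
    ∀ j : Fin n, ε * r (σ j) = l.getD (j : ℕ) 0

/-- The bidiagonal matrix with `2` on the diagonal, `-1` on the superdiagonal,
with `b i` subtracted from entry `(i, 0)`. -/
def bmat (b : ℕ → ℤ) (n : ℕ) : Matrix (Fin n) (Fin n) ℤ :=
  fun i j => (if (j : ℕ) = i then 2 else 0) + (if (j : ℕ) = (i : ℕ) + 1 then -1 else 0)
    - (if (j : ℕ) = 0 then b i else 0)

lemma bmat_submatrix_last (b : ℕ → ℤ) (n : ℕ) :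
    (bmat b (n + 1)).submatrix Fin.castSucc Fin.castSucc = bmat b n := by
  ext i j
  simp [bmat, Matrix.submatrix_apply]

lemma bmat_minor0_det (b : ℕ → ℤ) (n : ℕ) :
    ((bmat b (n + 1)).submatrix Fin.castSucc Fin.succ).det = (-1) ^ n := by
  have h : ((bmat b (n + 1)).submatrix Fin.castSucc Fin.succ).BlockTriangular OrderDual.toDual := by
    intro i j hij
    have hij' : (i : ℕ) < (j : ℕ) := hij
    simp only [Matrix.submatrix_apply, bmat, Fin.coe_castSucc, Fin.val_succ]
    have h1 : ¬ ((j : ℕ) + 1 = (i : ℕ)) := by omega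
    have h2 : ¬ ((j : ℕ) + 1 = (i : ℕ) + 1) := by omega
    have h3 : ¬ ((j : ℕ) + 1 = 0) := by omega
    simp [h1, h2, h3]; omega
  rw [Matrix.det_of_lowerTriangular _ h]
  have hd : ∀ i : Fin n, bmat b (n + 1) i.castSucc i.succ = -1 := by
    intro i
    simp only [bmat, Fin.coe_castSucc, Fin.val_succ]
    have h1 : ¬ ((i : ℕ) + 1 = (i : ℕ)) := by omega
    have h3 : ¬ ((i : ℕ) + 1 = 0) := by omega
    simp [h1, h3]
  simp [Matrix.submatrix_apply, hd]

lemma bmat_det_succ (b : ℕ → ℤ) (n : ℕ) :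
    (bmat b (n + 1)).det = 2 * (bmat b n).det - b n := by
  rw [Matrix.det_succ_row (bmat b (n + 1)) (Fin.last n)]
  have key : ∀ j : Fin (n + 1),
      (-1 : ℤ) ^ ((Fin.last n : ℕ) + (j : ℕ)) * bmat b (n + 1) (Fin.last n) j *
        ((bmat b (n + 1)).submatrix (Fin.last n).succAbove j.succAbove).det =
      (if j = Fin.last n then 2 * (bmat b n).det else 0) + (if j = 0 then -(b n) else 0) := by
    intro j
    have hentry : bmat b (n + 1) (Fin.last n) j =
        (if (j : ℕ) = n then 2 else 0) - (if (j : ℕ) = 0 then b n else 0) := by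
      have : ¬ ((j : ℕ) = n + 1) := by omega
      simp [bmat, Fin.last, this]
    by_cases hjl : j = Fin.last n
    · subst hjl
      by_cases hn0 : n = 0
      · subst hn0
        rw [hentry]
        have e1 : ((bmat b 1).submatrix (Fin.last 0).succAbove
            (Fin.last 0).succAbove).det = 1 := Matrix.det_fin_zero
        have e2 : (bmat b 0).det = 1 := Matrix.det_fin_zero
        rw [e1, e2]
        have h00 : ((Fin.last 0 : Fin 1) : ℕ) = 0 := rfl
        have h01 : (Fin.last 0 : Fin 1) = 0 := rfl
        rw [h00, h01]
        norm_num
        ring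
      · have hne : (Fin.last n) ≠ (0 : Fin (n + 1)) := by
          simp [Fin.ext_iff, Fin.last]; omega
        simp only [Fin.succAbove_last]
        rw [bmat_submatrix_last, hentry]
        have hv : ((Fin.last n : Fin (n+1)) : ℕ) = n := rfl
        rw [hv]
        simp only [if_neg hne, if_pos rfl, if_neg hn0, if_pos trivial, eq_self_iff_true, if_true]
        rw [show n + n = 2 * n by ring, pow_mul]
        norm_num
    · have hjn : ¬ ((j : ℕ) = n) := by
        intro h; exact hjl (Fin.ext h)
      by_cases hj0 : j = 0
      · subst hj0
        rw [hentry]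
        simp only [Fin.succAbove_last, Fin.succAbove_zero]
        rw [bmat_minor0_det]
        have h0 : ((0 : Fin (n+1)) : ℕ) = 0 := rfl
        rw [h0]
        have hn0 : ¬ ((0:ℕ) = n) := by
          intro h; exact hjl (by simp [Fin.ext_iff, ← h])
        simp only [if_neg hn0, if_neg hjl, if_pos rfl, if_pos trivial, eq_self_iff_true, if_true]
        have hv : ((Fin.last n : Fin (n+1)) : ℕ) = n := rfl
        rw [hv, Nat.add_zero]
        have hs : ((-1:ℤ)^n) * ((-1:ℤ)^n) = 1 := by
          rw [← pow_add, show n + n = 2*n by ring, pow_mul]; norm_num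
        linear_combination (-(b n)) * hs
      · have hj0' : ¬ ((j : ℕ) = 0) := by
          intro h; exact hj0 (Fin.ext h)
        rw [hentry]
        simp [hjn, hj0', hjl, hj0]
  rw [Finset.sum_congr rfl (fun j _ => key j)]
  rw [Finset.sum_add_distrib]
  simp [Finset.sum_ite_eq']
  ring

lemma bmat_det (b : ℕ → ℤ) (n : ℕ) :
    (bmat b n).det = 2 ^ n - ∑ i ∈ Finset.range n, b i * 2 ^ (n - 1 - i) := by
  induction n with
  | zero => simp [Matrix.det_fin_zero]
  | succ n ih =>
    rw [bmat_det_succ, ih, Finset.sum_range_succ]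
    have h1 : ∀ i ∈ Finset.range n, b i * 2 ^ (n + 1 - 1 - i) = 2 * (b i * 2 ^ (n - 1 - i)) := by
      intro i hi
      rw [Finset.mem_range] at hi
      rw [show n + 1 - 1 - i = (n - 1 - i) + 1 by omega, pow_succ]
      ring
    rw [Finset.sum_congr rfl h1]
    rw [show n + 1 - 1 - n = 0 by omega, ← Finset.mul_sum]
    push_cast
    ring

lemma bits_sum (n : ℕ) : ∀ q : ℕ, q < 2 ^ n →
    ∑ k ∈ Finset.range n, (q / 2 ^ k % 2) * 2 ^ k = q := by
  induction n with
  | zero => intro q hq; interval_cases q; simp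
  | succ n ih =>
    intro q hq
    rw [Finset.sum_range_succ']
    have h1 : ∀ k, q / 2 ^ (k + 1) % 2 * 2 ^ (k + 1) = 2 * ((q / 2) / 2 ^ k % 2 * 2 ^ k) := by
      intro k
      have h2 : q / 2 ^ (k + 1) = q / 2 / 2 ^ k := by
        rw [Nat.div_div_eq_div_mul, ← pow_succ']
      rw [h2, pow_succ]
      ring
    simp only [h1]
    rw [← Finset.mul_sum]
    rw [ih (q / 2) (by rw [pow_succ] at hq; omega)]
    omega

lemma admissible_of {n : ℕ} (r : Fin n → ℤ) (l : List ℤ) (hl : l ∈ patterns)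
    (f : Fin l.length → Fin n) (hf : Function.Injective f)
    (hval : ∀ k, r (f k) = l.get k)
    (hzero : ∀ j : Fin n, (∀ k, f k ≠ j) → r j = 0) : Admissible r := by
  classical
  have hmn : l.length ≤ n := by simpa using Fintype.card_le_of_injective f hf
  let g : {x : Fin n // (x : ℕ) < l.length} → {x : Fin n // ∃ k, f k = x} :=
    fun x => ⟨f ⟨(x.1 : ℕ), x.2⟩, ⟨_, rfl⟩⟩
  have hg : Function.Bijective g := by
    constructor
    · rintro ⟨x, hx⟩ ⟨y, hy⟩ hxy
      simp only [g, Subtype.mk.injEq] at hxy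
      have := hf hxy
      rw [Fin.ext_iff] at this
      exact Subtype.ext (Fin.ext this)
    · rintro ⟨y, k, hk⟩
      refine ⟨⟨⟨(k : ℕ), lt_of_lt_of_le k.2 hmn⟩, k.2⟩, Subtype.ext ?_⟩
      simp only [g]
      convert hk using 2
  let e := Equiv.ofBijective g hg
  refine ⟨l, hl, e.extendSubtype, 1, Or.inl rfl, ?_⟩
  intro j
  rw [one_mul]
  by_cases hj : (j : ℕ) < l.length
  · rw [Equiv.extendSubtype_apply_of_mem e j hj]
    have he : ((e ⟨j, hj⟩ : {x : Fin n // ∃ k, f k = x}) : Fin n) = f ⟨(j : ℕ), hj⟩ := rfl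
    rw [he, hval, List.getD_eq_getElem l 0 hj]
    simp [List.get_eq_getElem]
  · have hq := Equiv.extendSubtype_not_mem e j hj
    push_neg at hq
    rw [hzero _ hq, List.getD_eq_default l 0 (le_of_not_gt hj)]

lemma bmat_row_admissible (b : ℕ → ℤ) (hb : ∀ i, b i = 0 ∨ b i = 1) {n : ℕ} (i : Fin n) :
    Admissible (bmat b n i) := by
  have hin : (i : ℕ) < n := i.2
  have hpos : 0 < n := i.pos
  by_cases h0 : (i : ℕ) = 0
  · by_cases hl : (i : ℕ) + 1 < n
    · rcases hb i with hbi | hbi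
      · refine admissible_of _ [2, -1] (by simp [patterns]) ![i, ⟨(i : ℕ) + 1, hl⟩] ?_ ?_ ?_
        · intro a c h
          fin_cases a <;> fin_cases c <;> simp_all [Fin.ext_iff] <;> omega
        · intro k
          fin_cases k <;> simp [bmat, h0, h0 ▸ hbi]
        · intro j hj
          have h1 : ¬((i : ℕ) = (j : ℕ)) := fun h => hj ⟨0, two_pos⟩ (Fin.ext h)
          have h2 : ¬((i : ℕ) + 1 = (j : ℕ)) := fun h => hj ⟨1, one_lt_two⟩ (Fin.ext h)
          have c1 : ¬((j : ℕ) = (i : ℕ)) := by omega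
          have c2 : ¬((j : ℕ) = (i : ℕ) + 1) := by omega
          have c3 : ¬((j : ℕ) = 0) := by omega
          simp [bmat, c1, c2, c3]
      · refine admissible_of _ [1, -1] (by simp [patterns]) ![i, ⟨(i : ℕ) + 1, hl⟩] ?_ ?_ ?_
        · intro a c h
          fin_cases a <;> fin_cases c <;> simp_all [Fin.ext_iff] <;> omega
        · intro k
          fin_cases k <;> simp [bmat, h0, h0 ▸ hbi]
        · intro j hj
          have h1 : ¬((i : ℕ) = (j : ℕ)) := fun h => hj ⟨0, two_pos⟩ (Fin.ext h)
          have h2 : ¬((i : ℕ) + 1 = (j : ℕ)) := fun h => hj ⟨1, one_lt_two⟩ (Fin.ext h)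
          have c1 : ¬((j : ℕ) = (i : ℕ)) := by omega
          have c2 : ¬((j : ℕ) = (i : ℕ) + 1) := by omega
          have c3 : ¬((j : ℕ) = 0) := by omega
          simp [bmat, c1, c2, c3]
    · rcases hb i with hbi | hbi
      · refine admissible_of _ [2] (by simp [patterns]) ![i] ?_ ?_ ?_
        · intro a c h
          fin_cases a <;> fin_cases c <;> simp_all
        · intro k
          fin_cases k <;> simp [bmat, h0, h0 ▸ hbi]
        · intro j hj
          have h1 : ¬((i : ℕ) = (j : ℕ)) := fun h => hj ⟨0, one_pos⟩ (Fin.ext h)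
          have := j.2
          exact absurd (show (i : ℕ) = (j : ℕ) by omega) h1
      · refine admissible_of _ [1] (by simp [patterns]) ![i] ?_ ?_ ?_
        · intro a c h
          fin_cases a <;> fin_cases c <;> simp_all
        · intro k
          fin_cases k <;> simp [bmat, h0, h0 ▸ hbi]
        · intro j hj
          have h1 : ¬((i : ℕ) = (j : ℕ)) := fun h => hj ⟨0, one_pos⟩ (Fin.ext h)
          have := j.2
          exact absurd (show (i : ℕ) = (j : ℕ) by omega) h1
  · have A1 : ¬((i : ℕ) = (i : ℕ) + 1) := by omega
    have A2 : ¬((i : ℕ) + 1 = (i : ℕ)) := by omega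
    have A4 : ¬((i : ℕ) + 1 = 0) := by omega
    have B1 : ¬((0 : ℕ) = (i : ℕ)) := by omega
    have B2 : ¬((0 : ℕ) = (i : ℕ) + 1) := by omega
    by_cases hl : (i : ℕ) + 1 < n
    · rcases hb i with hbi | hbi
      · refine admissible_of _ [2, -1] (by simp [patterns]) ![i, ⟨(i : ℕ) + 1, hl⟩] ?_ ?_ ?_
        · intro a c h
          fin_cases a <;> fin_cases c <;> simp_all [Fin.ext_iff] <;> omega
        · intro k
          fin_cases k <;> simp [bmat, A1, A2, A4, B1, B2, h0, hbi]
        · intro j hj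
          have h1 : ¬((i : ℕ) = (j : ℕ)) := fun h => hj ⟨0, two_pos⟩ (Fin.ext h)
          have h2 : ¬((i : ℕ) + 1 = (j : ℕ)) := fun h => hj ⟨1, one_lt_two⟩ (Fin.ext h)
          have c1 : ¬((j : ℕ) = (i : ℕ)) := by omega
          have c2 : ¬((j : ℕ) = (i : ℕ) + 1) := by omega
          simp [bmat, c1, c2, hbi]
      · refine admissible_of _ [2, -1, -1] (by simp [patterns])
          ![i, ⟨(i : ℕ) + 1, hl⟩, ⟨0, hpos⟩] ?_ ?_ ?_
        · intro a c h
          fin_cases a <;> fin_cases c <;> simp_all [Fin.ext_iff] <;> omega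
        · intro k
          fin_cases k <;> simp [bmat, A1, A2, A4, B1, B2, h0, hbi]
        · intro j hj
          have h1 : ¬((i : ℕ) = (j : ℕ)) := fun h => hj ⟨0, three_pos⟩ (Fin.ext h)
          have h2 : ¬((i : ℕ) + 1 = (j : ℕ)) := fun h => hj ⟨1, Nat.succ_lt_succ two_pos⟩ (Fin.ext h)
          have h3 : ¬((0 : ℕ) = (j : ℕ)) := fun h => hj ⟨2, Nat.lt_succ_self 2⟩ (Fin.ext h)
          have c1 : ¬((j : ℕ) = (i : ℕ)) := by omega
          have c2 : ¬((j : ℕ) = (i : ℕ) + 1) := by omega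
          have c3 : ¬((j : ℕ) = 0) := by omega
          simp [bmat, c1, c2, c3]
    · rcases hb i with hbi | hbi
      · refine admissible_of _ [2] (by simp [patterns]) ![i] ?_ ?_ ?_
        · intro a c h
          fin_cases a <;> fin_cases c <;> simp_all
        · intro k
          fin_cases k <;> simp [bmat, A1, A2, A4, B1, B2, h0, hbi]
        · intro j hj
          have h1 : ¬((i : ℕ) = (j : ℕ)) := fun h => hj ⟨0, one_pos⟩ (Fin.ext h)
          have c1 : ¬((j : ℕ) = (i : ℕ)) := by omega
          have c2 : ¬((j : ℕ) = (i : ℕ) + 1) := by have := j.2; omega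
          simp [bmat, c1, c2, hbi]
      · refine admissible_of _ [2, -1] (by simp [patterns]) ![i, ⟨0, hpos⟩] ?_ ?_ ?_
        · intro a c h
          fin_cases a <;> fin_cases c <;> simp_all [Fin.ext_iff] <;> omega
        · intro k
          fin_cases k <;> simp [bmat, A1, A2, A4, B1, B2, h0, hbi]
        · intro j hj
          have h1 : ¬((i : ℕ) = (j : ℕ)) := fun h => hj ⟨0, two_pos⟩ (Fin.ext h)
          have h3 : ¬((0 : ℕ) = (j : ℕ)) := fun h => hj ⟨1, one_lt_two⟩ (Fin.ext h)
          have c1 : ¬((j : ℕ) = (i : ℕ)) := by omega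
          have c2 : ¬((j : ℕ) = (i : ℕ) + 1) := by have := j.2; omega
          have c3 : ¬((j : ℕ) = 0) := by omega
          simp [bmat, c1, c2, c3]

/-- For every positive integer `p ≤ 2^n` there is an `n × n` integer matrix all
of whose rows are of admissible type with `|det c| = p`. -/
theorem stmt11 (n p : ℕ) (hp : 0 < p) (hpn : p ≤ 2 ^ n) :
    ∃ c : Matrix (Fin n) (Fin n) ℤ,
      (∀ i, Admissible (c i)) ∧ c.det.natAbs = p := by
  set q := 2 ^ n - p with hq
  have hqlt : q < 2 ^ n := by
    have : 0 < 2 ^ n := Nat.pow_pos (by norm_num)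
    omega
  set b : ℕ → ℤ := fun i => ((q / 2 ^ (n - 1 - i)) % 2 : ℕ) with hbdef
  have hb : ∀ i, b i = 0 ∨ b i = 1 := by
    intro i
    rw [hbdef]
    rcases Nat.mod_two_eq_zero_or_one (q / 2 ^ (n - 1 - i)) with h | h
    · left; simp only []; exact_mod_cast h
    · right; simp only []; exact_mod_cast h
  refine ⟨bmat b n, fun i => bmat_row_admissible b hb i, ?_⟩
  rw [bmat_det]
  have hsum : ∑ i ∈ Finset.range n, b i * 2 ^ (n - 1 - i) = (q : ℤ) := by
    have hnat : ∑ i ∈ Finset.range n, (q / 2 ^ (n - 1 - i) % 2) * 2 ^ (n - 1 - i) = q := by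
      rw [Finset.sum_range_reflect (fun k => (q / 2 ^ k % 2) * 2 ^ k) n]
      exact bits_sum n q hqlt
    calc ∑ i ∈ Finset.range n, b i * 2 ^ (n - 1 - i)
        = ((∑ i ∈ Finset.range n, (q / 2 ^ (n - 1 - i) % 2) * 2 ^ (n - 1 - i) : ℕ) : ℤ) := by
          push_cast [hbdef]; ring_nf
      _ = (q : ℤ) := by rw [hnat]
  rw [hsum]
  have hcast : (q : ℤ) = (2 : ℤ) ^ n - (p : ℤ) := by
    rw [hq, Nat.cast_sub hpn]; push_cast; ring
  rw [show (2 : ℤ) ^ n - (q : ℤ) = (p : ℤ) by rw [hcast]; ring]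
  exact Int.natAbs_natCast p
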